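/- Hardy-type inequality on the disc: let Φ be holomorphic on an open neighborhood of the closed unit disc, let z ∈ ℂ with |z| = 1, and let Υ(w) = (Φ(w) − Φ(z))/(w − z) for w ≠ z, extended by Υ(z) = Φ′(z). Then ∬_𝔻 |Υ′(w)|² dA(w) ≤ ∬_𝔻 |Φ″(w)|² dA(w), where dA is Lebesgue area measure on the open unit disc 𝔻. -/

import Mathlib

open MeasureTheory Real

/-- The `n`-th Fourier coefficient of a `2π`-periodic function `f : ℝ → ℝ`. -/
noncomputable def fourierC (f : ℝ → ℝ) (n : ℤ) : ℂ :=
  (1 / (2 * π)) * ∫ θ in (0:ℝ)..(2 * π), (f θ : ℂ) * Complex.exp (-Complex.I * (n : ℂ) * (θ : ℂ))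

/-- The Hilbert transform on the circle, sending `Σ cₙ e^{inθ}` to `Σ (−i sgn n) cₙ e^{inθ}`. -/
noncomputable def hilbertT (f : ℝ → ℝ) (θ : ℝ) : ℝ :=
  (∑' n : ℤ, -Complex.I * ((n.sign : ℤ) : ℂ) * fourierC f n *
    Complex.exp (Complex.I * (n : ℂ) * (θ : ℂ))).re

open Set
open scoped ENNReal

namespace HardyAux

noncomputable def ell (z : ℂ) (t : ℝ) (w : ℂ) : ℂ := z + (t : ℂ) * (w - z)

lemma ell_mem_closedBall {z w : ℂ} (hz : ‖z‖ = 1) (hw : w ∈ Metric.closedBall (0:ℂ) 1)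
    {t : ℝ} (ht : t ∈ Set.Icc (0:ℝ) 1) : ell z t w ∈ Metric.closedBall (0:ℂ) 1 := by
  obtain ⟨ht0, ht1⟩ := ht
  have hw1 : ‖w‖ ≤ 1 := by simpa [Metric.mem_closedBall] using hw
  have hrw : ell z t w = (1 - (t:ℂ)) * z + (t:ℂ) * w := by unfold ell; ring
  have : ‖ell z t w‖ ≤ (1 - t) * 1 + t * ‖w‖ := by
    rw [hrw]
    refine (norm_add_le _ _).trans ?_
    gcongr
    · rw [show ((1:ℂ) - (t:ℂ)) = ((1 - t : ℝ) : ℂ) by push_cast; ring, norm_mul]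
      simp only [Complex.norm_real, hz, mul_one]
      rw [Real.norm_eq_abs]
      rw [abs_of_nonneg (sub_nonneg.2 ht1)]
    · rw [norm_mul]
      gcongr
      simp [Complex.norm_real, abs_of_nonneg ht0]
  refine Metric.mem_closedBall.2 ?_
  simp only [dist_zero_right]
  nlinarith

lemma ell_mem_ball {z w : ℂ} (hz : ‖z‖ = 1) (hw : w ∈ Metric.ball (0:ℂ) 1)
    {t : ℝ} (ht : t ∈ Set.Ioc (0:ℝ) 1) : ell z t w ∈ Metric.ball (0:ℂ) 1 := by
  obtain ⟨ht0, ht1⟩ := ht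
  have hw1 : ‖w‖ < 1 := by simpa [Metric.mem_ball] using hw
  have hrw : ell z t w = (1 - (t:ℂ)) * z + (t:ℂ) * w := by unfold ell; ring
  have : ‖ell z t w‖ ≤ (1 - t) * 1 + t * ‖w‖ := by
    rw [hrw]
    refine (norm_add_le _ _).trans ?_
    gcongr
    · rw [show ((1:ℂ) - (t:ℂ)) = ((1 - t : ℝ) : ℂ) by push_cast; ring, norm_mul]
      simp only [Complex.norm_real, hz, mul_one]
      rw [Real.norm_eq_abs]
      rw [abs_of_nonneg (sub_nonneg.2 ht1)]
    · rw [norm_mul]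
      gcongr
      simp [Complex.norm_real, abs_of_nonneg ht0.le]
  refine Metric.mem_ball.2 ?_
  simp only [dist_zero_right]
  nlinarith


lemma keyDeriv (Φ : ℂ → ℂ) (U : Set ℂ) (hU : IsOpen U)
    (hsub : Metric.closedBall (0:ℂ) 1 ⊆ U) (hΦ : DifferentiableOn ℂ Φ U)
    (z : ℂ) (hz : ‖z‖ = 1) {w : ℂ} (hw : w ∈ Metric.ball (0:ℂ) 1) :
    HasDerivAt (fun w' => if w' = z then deriv Φ z else (Φ w' - Φ z) / (w' - z))
      (∫ t in (0:ℝ)..1, (t : ℂ) * deriv (deriv Φ) (ell z t w)) w := by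
  have hΦa : AnalyticOnNhd ℂ Φ U := hΦ.analyticOnNhd hU
  have hΦ' : AnalyticOnNhd ℂ (deriv Φ) U := hΦa.deriv
  have hwK : w ∈ Metric.closedBall (0:ℂ) 1 := Metric.ball_subset_closedBall hw
  have hwU : w ∈ U := hsub hwK
  have hwz : w ≠ z := by
    intro h
    have : ‖w‖ < 1 := by simpa using hw
    rw [h, hz] at this
    exact lt_irrefl _ this
  have hc : w - z ≠ 0 := sub_ne_zero.2 hwz
  set c := w - z with hcdef
  -- continuity of the second derivative on U
  have hF_cont : ContinuousOn (deriv (deriv Φ)) U := (hΦ'.deriv).continuousOn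
  -- the integrand is continuous in t
  have hcont : ContinuousOn (fun t : ℝ => (t : ℂ) * c * deriv (deriv Φ) (ell z t w))
      (Set.uIcc (0:ℝ) 1) := by
    rw [Set.uIcc_of_le (zero_le_one)]
    refine ContinuousOn.mul (by fun_prop) ?_
    refine hF_cont.comp (by unfold ell; fun_prop) ?_
    intro t ht
    exact hsub (ell_mem_closedBall hz hwK ht)
  have hint : IntervalIntegrable (fun t : ℝ => (t : ℂ) * c * deriv (deriv Φ) (ell z t w))
      volume 0 1 := hcont.intervalIntegrable
  -- FTC for E(s) = s * Φ'(z+sc) - (Φ(z+sc) - Φ z)/c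
  have hE : ∀ t ∈ Set.uIcc (0:ℝ) 1,
      HasDerivAt (fun u : ℝ => (u : ℂ) * deriv Φ (z + u * c) - (Φ (z + u * c) - Φ z) / c)
        ((t : ℂ) * c * deriv (deriv Φ) (ell z t w)) t := by
    intro t ht
    rw [Set.uIcc_of_le (zero_le_one)] at ht
    have hptK : ell z t w ∈ Metric.closedBall (0:ℂ) 1 := ell_mem_closedBall hz hwK ht
    have hptU : z + (t:ℂ) * c ∈ U := hsub hptK
    have hinner : HasDerivAt (fun s : ℂ => z + s * c) c (t : ℂ) := by
      simpa using ((hasDerivAt_id ((t:ℂ))).mul_const c).const_add z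
    have h1 : HasDerivAt (fun s : ℂ => deriv Φ (z + s * c))
        (deriv (deriv Φ) (z + (t:ℂ) * c) * c) (t : ℂ) :=
      HasDerivAt.comp (h₂ := deriv Φ) (h := fun s : ℂ => z + s * c) _
        ((hΦ' _ hptU).differentiableAt.hasDerivAt) hinner
    have h3 : HasDerivAt (fun s : ℂ => Φ (z + s * c))
        (deriv Φ (z + (t:ℂ) * c) * c) (t : ℂ) :=
      HasDerivAt.comp (h₂ := Φ) (h := fun s : ℂ => z + s * c) _
        ((hΦ.differentiableAt (hU.mem_nhds hptU)).hasDerivAt) hinner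
    have h2 : HasDerivAt (fun s : ℂ => s * deriv Φ (z + s * c))
        (1 * deriv Φ (z + (t:ℂ) * c) + (t:ℂ) * (deriv (deriv Φ) (z + (t:ℂ) * c) * c))
        (t : ℂ) := (hasDerivAt_id _).mul h1
    have h4 : HasDerivAt (fun s : ℂ => s * deriv Φ (z + s * c) - (Φ (z + s * c) - Φ z) / c)
        (1 * deriv Φ (z + (t:ℂ) * c) + (t:ℂ) * (deriv (deriv Φ) (z + (t:ℂ) * c) * c)
          - (deriv Φ (z + (t:ℂ) * c) * c) / c) (t : ℂ) :=
      h2.sub (((h3.sub_const (Φ z)).div_const c))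
    have h5 := h4.comp_ofReal
    have : (1 * deriv Φ (z + (t:ℂ) * c) + (t:ℂ) * (deriv (deriv Φ) (z + (t:ℂ) * c) * c)
          - (deriv Φ (z + (t:ℂ) * c) * c) / c)
        = (t : ℂ) * c * deriv (deriv Φ) (ell z t w) := by
      unfold ell
      field_simp
      ring
    rw [this] at h5
    exact h5
  have hFTC := intervalIntegral.integral_eq_sub_of_hasDerivAt hE hint
  -- compute the endpoint values
  have hend : (∫ t in (0:ℝ)..1, (t : ℂ) * c * deriv (deriv Φ) (ell z t w))
      = deriv Φ w - (Φ w - Φ z) / c := by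
    rw [hFTC]
    push_cast
    rw [show z + 1 * c = w by rw [hcdef]; ring, show z + 0 * c = z by ring]
    ring
  -- pull out c
  have hpull : (∫ t in (0:ℝ)..1, (t : ℂ) * c * deriv (deriv Φ) (ell z t w))
      = c * ∫ t in (0:ℝ)..1, (t : ℂ) * deriv (deriv Φ) (ell z t w) := by
    rw [← intervalIntegral.integral_const_mul]
    congr 1
    funext t
    ring
  -- derivative of the quotient
  have hq : HasDerivAt (fun w' => (Φ w' - Φ z) / (w' - z))
      ((deriv Φ w * (w - z) - (Φ w - Φ z) * 1) / (w - z) ^ 2) w := by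
    refine HasDerivAt.div ?_ ((hasDerivAt_id w).sub_const z) hc
    exact ((hΦ.differentiableAt (hU.mem_nhds hwU)).hasDerivAt).sub_const (Φ z)
  have heq : (fun w' => if w' = z then deriv Φ z else (Φ w' - Φ z) / (w' - z))
      =ᶠ[nhds w] fun w' => (Φ w' - Φ z) / (w' - z) := by
    filter_upwards [eventually_ne_nhds hwz] with x hx
    rw [if_neg hx]
  have hval : (∫ t in (0:ℝ)..1, (t : ℂ) * deriv (deriv Φ) (ell z t w))
      = (deriv Φ w * (w - z) - (Φ w - Φ z) * 1) / (w - z) ^ 2 := by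
    have := hend
    rw [hpull] at this
    have h2 : (∫ t in (0:ℝ)..1, (t : ℂ) * deriv (deriv Φ) (ell z t w))
        = (deriv Φ w - (Φ w - Φ z) / c) / c := by
      rw [eq_div_iff hc]
      linear_combination this
    rw [h2, hcdef]
    field_simp
  rw [hval]
  exact hq.congr_of_eventuallyEq heq


lemma changeVar (z : ℂ) (h : ℂ → ℝ≥0∞) {t : ℝ} (ht : t ∈ Set.Ioc (0:ℝ) 1) (hz : ‖z‖ = 1) :
    (∫⁻ w in Metric.ball (0:ℂ) 1, h (ell z t w))
      ≤ (ENNReal.ofReal (t ^ 2))⁻¹ * ∫⁻ w in Metric.ball (0:ℂ) 1, h w := by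
  obtain ⟨ht0, ht1⟩ := ht
  set D := Metric.ball (0:ℂ) 1 with hD
  set L : ℂ →L[ℝ] ℂ := t • (ContinuousLinearMap.id ℝ ℂ) with hL
  have hfd : ∀ w ∈ D, HasFDerivWithinAt (fun w => ell z t w) L D w := by
    intro w _
    have h1 : HasFDerivAt (fun w : ℂ => z + t • (w - z)) L w := by
      simpa [hL] using (((hasFDerivAt_id w).sub_const z).const_smul t).const_add z
    have h2 : (fun w : ℂ => z + t • (w - z)) = fun w => ell z t w := by
      funext w; unfold ell; rw [Complex.real_smul]
    exact (h2 ▸ h1).hasFDerivWithinAt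
  have hinj : Set.InjOn (fun w => ell z t w) D := by
    intro a _ b _ hab
    unfold ell at hab
    have htne : (t:ℂ) ≠ 0 := by exact_mod_cast ne_of_gt ht0
    have h3 : (t:ℂ) * (a - z) = (t:ℂ) * (b - z) := by
      have := hab
      simpa using congrArg (fun x => x - z) this
    have := mul_left_cancel₀ htne h3
    linear_combination this
  have hdet : |L.det| = t ^ 2 := by
    have : L.det = t ^ 2 := by
      rw [hL]
      show LinearMap.det ((t • ContinuousLinearMap.id ℝ ℂ : ℂ →L[ℝ] ℂ) : ℂ →ₗ[ℝ] ℂ) = t ^ 2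
      rw [ContinuousLinearMap.coe_smul]
      rw [LinearMap.det_smul]
      simp [Complex.finrank_real_complex]
    rw [this, abs_of_nonneg (sq_nonneg t)]
  have hcv := lintegral_image_eq_lintegral_abs_det_fderiv_mul (μ := volume) measurableSet_ball
    (f' := fun _ => L) hfd hinj h
  simp only [hdet] at hcv
  have htne : ENNReal.ofReal (t ^ 2) ≠ 0 := by
    simp [ENNReal.ofReal_eq_zero]
    positivity
  have htop : ENNReal.ofReal (t ^ 2) ≠ ⊤ := ENNReal.ofReal_ne_top
  have hstep : (∫⁻ w in D, h (ell z t w))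
      = (ENNReal.ofReal (t ^ 2))⁻¹ * ∫⁻ w in D, ENNReal.ofReal (t ^ 2) * h (ell z t w) := by
    rw [lintegral_const_mul' _ _ htop, ← mul_assoc, ENNReal.inv_mul_cancel htne htop, one_mul]
  rw [hstep, ← hcv]
  refine mul_le_mul_right (lintegral_mono_set ?_) _
  rintro x ⟨w, hwD, rfl⟩
  exact ell_mem_ball hz hwD ⟨ht0, ht1⟩

end HardyAux


open HardyAux

/-- Hardy-type inequality on the disc:
`∬_𝔻 |Υ′(w)|² dA ≤ ∬_𝔻 |Φ″(w)|² dA` for the difference quotient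
`Υ(w) = (Φ(w) − Φ(z))/(w − z)` with `|z| = 1`. -/
theorem hardy_inequality_disc (Φ : ℂ → ℂ) (U : Set ℂ) (hU : IsOpen U)
    (hsub : Metric.closedBall (0:ℂ) 1 ⊆ U) (hΦ : DifferentiableOn ℂ Φ U)
    (z : ℂ) (hz : ‖z‖ = 1) :
    (∫ w in Metric.ball (0:ℂ) 1,
        ‖deriv (fun w' => if w' = z then deriv Φ z else (Φ w' - Φ z) / (w' - z)) w‖ ^ 2)
      ≤ ∫ w in Metric.ball (0:ℂ) 1, ‖deriv (deriv Φ) w‖ ^ 2 := by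
  set D := Metric.ball (0:ℂ) 1 with hDdef
  set Υ : ℂ → ℂ := fun w' => if w' = z then deriv Φ z else (Φ w' - Φ z) / (w' - z) with hΥdef
  set G : ℂ → ℂ := deriv Υ with hGdef
  set F : ℂ → ℂ := deriv (deriv Φ) with hFdef
  have hzK : z ∈ Metric.closedBall (0:ℂ) 1 := by
    simp [Metric.mem_closedBall, hz, dist_zero_right, hz.le]
  have hΦa : AnalyticOnNhd ℂ Φ U := hΦ.analyticOnNhd hU
  have hF_cont : ContinuousOn F U := ((hΦa.deriv).deriv).continuousOn
  have hG_meas : Measurable G := measurable_deriv Υ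
  have hF_meas : Measurable F := measurable_deriv (deriv Φ)
  obtain ⟨M, hM⟩ := (isCompact_closedBall (0:ℂ) 1).exists_bound_of_continuousOn
    (hF_cont.mono hsub)
  have hM0 : 0 ≤ M := le_trans (norm_nonneg _) (hM z hzK)
  have hkey : ∀ w ∈ D, G w = ∫ t in (0:ℝ)..1, (t : ℂ) * F (ell z t w) := by
    intro w hw
    exact (keyDeriv Φ U hU hsub hΦ z hz hw).deriv
  -- pointwise bound for G on D
  have hg_norm : ∀ w ∈ D, ‖G w‖ ≤ M := by
    intro w hw
    rw [hkey w hw]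
    have hb : ∀ t ∈ Set.uIoc (0:ℝ) 1, ‖(t : ℂ) * F (ell z t w)‖ ≤ M := by
      intro t ht
      rw [Set.uIoc_of_le zero_le_one] at ht
      have hFb : ‖F (ell z t w)‖ ≤ M :=
        hM _ (ell_mem_closedBall hz (Metric.ball_subset_closedBall hw) ⟨ht.1.le, ht.2⟩)
      rw [norm_mul]
      calc ‖(t:ℂ)‖ * ‖F (ell z t w)‖ ≤ 1 * M := by
            refine mul_le_mul ?_ hFb (norm_nonneg _) zero_le_one
            simp [Complex.norm_real, abs_of_nonneg ht.1.le, ht.2]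
        _ = M := one_mul M
    simpa using intervalIntegral.norm_integral_le_of_norm_le_const hb
  set A := ∫⁻ w in D, ENNReal.ofReal ‖G w‖ ^ (2:ℝ) with hAdef
  set I2 := ∫⁻ w in D, ENNReal.ofReal ‖F w‖ ^ (2:ℝ) with hI2def
  have hOf2 : ∀ x : ℝ, 0 ≤ x → ENNReal.ofReal x ^ (2:ℝ) = ENNReal.ofReal (x ^ 2) := by
    intro x hx
    rw [ENNReal.ofReal_rpow_of_nonneg hx (by norm_num)]
    norm_num [show (2:ℝ) = ((2:ℕ):ℝ) by norm_num, Real.rpow_natCast]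
  have hDvol : volume D ≠ ⊤ := measure_ball_lt_top.ne
  have hbound : ∀ (h : ℂ → ℂ), (∀ w ∈ D, ‖h w‖ ≤ M) →
      (∫⁻ w in D, ENNReal.ofReal ‖h w‖ ^ (2:ℝ)) ≤ ENNReal.ofReal (M ^ 2) * volume D := by
    intro h hh
    calc (∫⁻ w in D, ENNReal.ofReal ‖h w‖ ^ (2:ℝ))
        ≤ ∫⁻ _ in D, ENNReal.ofReal (M ^ 2) := by
          refine lintegral_mono_ae (((ae_restrict_mem measurableSet_ball).mono ?_))
          intro w hw
          rw [← hOf2 M hM0]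
          exact ENNReal.rpow_le_rpow (ENNReal.ofReal_le_ofReal (hh w hw)) (by norm_num)
      _ = ENNReal.ofReal (M ^ 2) * volume D := setLIntegral_const D _
  have hA_top : A ≠ ⊤ :=
    ((hbound G hg_norm).trans_lt (ENNReal.mul_lt_top ENNReal.ofReal_lt_top
      hDvol.lt_top)).ne
  have hI_top : I2 ≠ ⊤ := by
    refine ((hbound F ?_).trans_lt (ENNReal.mul_lt_top ENNReal.ofReal_lt_top hDvol.lt_top)).ne
    exact fun w hw => hM w (Metric.ball_subset_closedBall hw)
  -- Hölder step for a fixed t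
  have hHolder : ∀ t ∈ Set.Ioc (0:ℝ) 1,
      (∫⁻ w in D, ENNReal.ofReal ‖G w‖ * ENNReal.ofReal ‖F (ell z t w)‖)
        ≤ A ^ (1/2 : ℝ) * ((ENNReal.ofReal t)⁻¹ * I2 ^ (1/2 : ℝ)) := by
    intro t ht
    have hconj : Real.HolderConjugate 2 2 := ⟨by norm_num, by norm_num, by norm_num⟩
    have hmG : AEMeasurable (fun w => ENNReal.ofReal ‖G w‖) (volume.restrict D) :=
      (hG_meas.norm.ennreal_ofReal).aemeasurable
    have hcellm : Measurable (fun w : ℂ => ell z t w) := by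
      unfold ell; fun_prop
    have hmF : AEMeasurable (fun w => ENNReal.ofReal ‖F (ell z t w)‖) (volume.restrict D) :=
      (((hF_meas.comp hcellm).norm).ennreal_ofReal).aemeasurable
    have hH := ENNReal.lintegral_mul_le_Lp_mul_Lq (volume.restrict D) hconj hmG hmF
    simp only [Pi.mul_apply, one_div] at hH
    have hCV : (∫⁻ w in D, ENNReal.ofReal ‖F (ell z t w)‖ ^ (2:ℝ))
        ≤ (ENNReal.ofReal (t ^ 2))⁻¹ * I2 :=
      changeVar z (fun x => ENNReal.ofReal ‖F x‖ ^ (2:ℝ)) ht hz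
    have hsqrt : ((ENNReal.ofReal (t ^ 2))⁻¹ * I2) ^ (1/2 : ℝ)
        = (ENNReal.ofReal t)⁻¹ * I2 ^ (1/2 : ℝ) := by
      rw [ENNReal.mul_rpow_of_nonneg _ _ (by norm_num : (0:ℝ) ≤ 1/2)]
      congr 1
      rw [ENNReal.inv_rpow]
      congr 1
      rw [ENNReal.ofReal_rpow_of_nonneg (sq_nonneg t) (by norm_num : (0:ℝ) ≤ 1/2)]
      congr 1
      rw [← Real.rpow_natCast t 2, ← Real.rpow_mul ht.1.le]
      norm_num
    calc (∫⁻ w in D, ENNReal.ofReal ‖G w‖ * ENNReal.ofReal ‖F (ell z t w)‖)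
        ≤ (∫⁻ w in D, ENNReal.ofReal ‖G w‖ ^ (2:ℝ)) ^ (2:ℝ)⁻¹
            * (∫⁻ w in D, ENNReal.ofReal ‖F (ell z t w)‖ ^ (2:ℝ)) ^ (2:ℝ)⁻¹ := hH
      _ ≤ A ^ (1/2 : ℝ) * ((ENNReal.ofReal t)⁻¹ * I2 ^ (1/2 : ℝ)) := by
          rw [show ((2:ℝ)⁻¹ = (1/2 : ℝ)) by norm_num, ← hsqrt]
          exact mul_le_mul_right (ENNReal.rpow_le_rpow hCV (by norm_num)) _
  -- pointwise Cauchy–Schwarz setup in t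
  have hB2 : ∀ w ∈ D, ENNReal.ofReal ‖G w‖ ^ (2:ℝ)
      ≤ ∫⁻ t in Set.Ioc (0:ℝ) 1,
          ENNReal.ofReal ‖G w‖ * (ENNReal.ofReal t * ENNReal.ofReal ‖F (ell z t w)‖) := by
    intro w hw
    have hwK : w ∈ Metric.closedBall (0:ℂ) 1 := Metric.ball_subset_closedBall hw
    have hcont : ContinuousOn (fun t : ℝ => t * ‖F (ell z t w)‖) (Set.Icc (0:ℝ) 1) := by
      refine ContinuousOn.mul (by fun_prop) (ContinuousOn.norm ?_)
      refine hF_cont.comp (by unfold ell; fun_prop) ?_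
      intro t ht
      exact hsub (ell_mem_closedBall hz hwK ht)
    have hint2 : IntegrableOn (fun t : ℝ => t * ‖F (ell z t w)‖) (Set.Ioc 0 1) volume :=
      (hcont.integrableOn_Icc).mono_set Set.Ioc_subset_Icc_self
    have h1 : ‖G w‖ ≤ ∫ t in Set.Ioc (0:ℝ) 1, t * ‖F (ell z t w)‖ := by
      rw [hkey w hw]
      calc ‖∫ t in (0:ℝ)..1, (t : ℂ) * F (ell z t w)‖
          ≤ ∫ t in (0:ℝ)..1, ‖(t : ℂ) * F (ell z t w)‖ :=
            intervalIntegral.norm_integral_le_integral_norm zero_le_one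
        _ = ∫ t in Set.Ioc (0:ℝ) 1, ‖(t : ℂ) * F (ell z t w)‖ :=
            intervalIntegral.integral_of_le zero_le_one
        _ = ∫ t in Set.Ioc (0:ℝ) 1, t * ‖F (ell z t w)‖ := by
            refine setIntegral_congr_fun measurableSet_Ioc ?_
            intro t ht
            simp only [norm_mul, Complex.norm_real, Real.norm_eq_abs]
            rw [abs_of_nonneg ht.1.le]
    have h2 : ENNReal.ofReal (∫ t in Set.Ioc (0:ℝ) 1, t * ‖F (ell z t w)‖)
        = ∫⁻ t in Set.Ioc (0:ℝ) 1, ENNReal.ofReal (t * ‖F (ell z t w)‖) := by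
      refine ofReal_integral_eq_lintegral_ofReal hint2 ?_
      refine (ae_restrict_mem measurableSet_Ioc).mono ?_
      intro t ht
      exact mul_nonneg ht.1.le (norm_nonneg _)
    have hsq : ENNReal.ofReal ‖G w‖ ^ (2:ℝ) = ENNReal.ofReal ‖G w‖ * ENNReal.ofReal ‖G w‖ := by
      rw [show (2:ℝ) = ((2:ℕ):ℝ) by norm_num, ENNReal.rpow_natCast, sq]
    calc ENNReal.ofReal ‖G w‖ ^ (2:ℝ)
        = ENNReal.ofReal ‖G w‖ * ENNReal.ofReal ‖G w‖ := hsq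
      _ ≤ ENNReal.ofReal ‖G w‖
            * ENNReal.ofReal (∫ t in Set.Ioc (0:ℝ) 1, t * ‖F (ell z t w)‖) :=
          mul_le_mul_right (ENNReal.ofReal_le_ofReal h1) _
      _ = ENNReal.ofReal ‖G w‖
            * ∫⁻ t in Set.Ioc (0:ℝ) 1, ENNReal.ofReal (t * ‖F (ell z t w)‖) := by rw [h2]
      _ = ∫⁻ t in Set.Ioc (0:ℝ) 1,
            ENNReal.ofReal ‖G w‖ * ENNReal.ofReal (t * ‖F (ell z t w)‖) :=
          (lintegral_const_mul' _ _ ENNReal.ofReal_ne_top).symm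
      _ = ∫⁻ t in Set.Ioc (0:ℝ) 1,
            ENNReal.ofReal ‖G w‖ * (ENNReal.ofReal t * ENNReal.ofReal ‖F (ell z t w)‖) := by
          refine setLIntegral_congr_fun measurableSet_Ioc ?_
          intro t ht
          dsimp only
          rw [ENNReal.ofReal_mul ht.1.le]
  -- Tonelli
  have hQm : Measurable (fun p : ℂ × ℝ =>
      ENNReal.ofReal ‖G p.1‖ * (ENNReal.ofReal p.2 * ENNReal.ofReal ‖F (ell z p.2 p.1)‖)) := by
    have hellm : Measurable (fun p : ℂ × ℝ => ell z p.2 p.1) := by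
      unfold ell; fun_prop
    exact ((hG_meas.comp measurable_fst).norm.ennreal_ofReal).mul
      ((measurable_snd.ennreal_ofReal).mul
        (((hF_meas.comp hellm).norm).ennreal_ofReal))
  have hswap : (∫⁻ w in D, ∫⁻ t in Set.Ioc (0:ℝ) 1,
        ENNReal.ofReal ‖G w‖ * (ENNReal.ofReal t * ENNReal.ofReal ‖F (ell z t w)‖))
      = ∫⁻ t in Set.Ioc (0:ℝ) 1, ∫⁻ w in D,
        ENNReal.ofReal ‖G w‖ * (ENNReal.ofReal t * ENNReal.ofReal ‖F (ell z t w)‖) :=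
    lintegral_lintegral_swap hQm.aemeasurable
  -- main estimate
  have hmain : A ≤ A ^ (1/2 : ℝ) * I2 ^ (1/2 : ℝ) := by
    calc A ≤ ∫⁻ w in D, ∫⁻ t in Set.Ioc (0:ℝ) 1,
            ENNReal.ofReal ‖G w‖ * (ENNReal.ofReal t * ENNReal.ofReal ‖F (ell z t w)‖) := by
          rw [hAdef]
          refine lintegral_mono_ae ((ae_restrict_mem measurableSet_ball).mono ?_)
          intro w hw
          exact hB2 w hw
      _ = ∫⁻ t in Set.Ioc (0:ℝ) 1, ∫⁻ w in D,
            ENNReal.ofReal ‖G w‖ * (ENNReal.ofReal t * ENNReal.ofReal ‖F (ell z t w)‖) := hswap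
      _ ≤ ∫⁻ _ in Set.Ioc (0:ℝ) 1, A ^ (1/2 : ℝ) * I2 ^ (1/2 : ℝ) := by
          refine lintegral_mono_ae ((ae_restrict_mem measurableSet_Ioc).mono ?_)
          intro t ht
          have hoft0 : ENNReal.ofReal t ≠ 0 := by
            simp only [ne_eq, ENNReal.ofReal_eq_zero, not_le]; exact ht.1
          have hrearr : (∫⁻ w in D, ENNReal.ofReal ‖G w‖
                * (ENNReal.ofReal t * ENNReal.ofReal ‖F (ell z t w)‖))
              = ENNReal.ofReal t * ∫⁻ w in D,
                ENNReal.ofReal ‖G w‖ * ENNReal.ofReal ‖F (ell z t w)‖ := by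
            rw [← lintegral_const_mul' _ _ ENNReal.ofReal_ne_top]
            refine lintegral_congr ?_
            intro w
            ring
          rw [hrearr]
          calc ENNReal.ofReal t * ∫⁻ w in D,
                ENNReal.ofReal ‖G w‖ * ENNReal.ofReal ‖F (ell z t w)‖
              ≤ ENNReal.ofReal t * (A ^ (1/2 : ℝ) * ((ENNReal.ofReal t)⁻¹ * I2 ^ (1/2 : ℝ))) :=
                mul_le_mul_right (hHolder t ht) _
            _ = (ENNReal.ofReal t * (ENNReal.ofReal t)⁻¹) * (A ^ (1/2:ℝ) * I2 ^ (1/2:ℝ)) := by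
                ring
            _ = A ^ (1/2:ℝ) * I2 ^ (1/2:ℝ) := by
                rw [ENNReal.mul_inv_cancel hoft0 ENNReal.ofReal_ne_top, one_mul]
      _ = A ^ (1/2 : ℝ) * I2 ^ (1/2 : ℝ) := by
          rw [setLIntegral_const]
          simp [Real.volume_Ioc]
  -- conclude A ≤ I2
  have hAI : A ≤ I2 := by
    by_cases hA0 : A = 0
    · exact hA0 ▸ zero_le
    · have h12 : A ^ (1/2 : ℝ) ≠ 0 := by
        simp [ENNReal.rpow_eq_zero_iff, hA0, hA_top]
      have h12t : A ^ (1/2 : ℝ) ≠ ⊤ := ENNReal.rpow_ne_top_of_nonneg (by norm_num) hA_top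
      have hAA : A ^ (1/2 : ℝ) * A ^ (1/2 : ℝ) = A := by
        rw [← ENNReal.rpow_add _ _ hA0 hA_top]; norm_num
      have hm2 : A ^ (1/2:ℝ) * A ^ (1/2:ℝ) ≤ A ^ (1/2:ℝ) * I2 ^ (1/2:ℝ) := by
        rw [hAA]; exact hmain
      have hhalf : A ^ (1/2 : ℝ) ≤ I2 ^ (1/2 : ℝ) :=
        (ENNReal.mul_le_mul_iff_right h12 h12t).mp hm2
      calc A = (A ^ (1/2:ℝ)) ^ (2:ℝ) := by
            rw [← ENNReal.rpow_mul]; norm_num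
        _ ≤ (I2 ^ (1/2:ℝ)) ^ (2:ℝ) := ENNReal.rpow_le_rpow hhalf (by norm_num)
        _ = I2 := by rw [← ENNReal.rpow_mul]; norm_num
  -- convert the Bochner integrals
  have hGnn : 0 ≤ᵐ[volume.restrict D] fun w => ‖G w‖ ^ 2 :=
    ae_of_all _ fun w => by positivity
  have hFnn : 0 ≤ᵐ[volume.restrict D] fun w => ‖F w‖ ^ 2 :=
    ae_of_all _ fun w => by positivity
  have hGsm : AEStronglyMeasurable (fun w => ‖G w‖ ^ 2) (volume.restrict D) :=
    ((hG_meas.norm.pow_const 2).aestronglyMeasurable)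
  have hFsm : AEStronglyMeasurable (fun w => ‖F w‖ ^ 2) (volume.restrict D) :=
    ((hF_meas.norm.pow_const 2).aestronglyMeasurable)
  rw [integral_eq_lintegral_of_nonneg_ae hGnn hGsm,
    integral_eq_lintegral_of_nonneg_ae hFnn hFsm]
  have hGrw : (∫⁻ w in D, ENNReal.ofReal (‖G w‖ ^ 2)) = A := by
    rw [hAdef]
    refine lintegral_congr fun w => ?_
    rw [hOf2 _ (norm_nonneg _)]
  have hFrw : (∫⁻ w in D, ENNReal.ofReal (‖F w‖ ^ 2)) = I2 := by
    rw [hI2def]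
    refine lintegral_congr fun w => ?_
    rw [hOf2 _ (norm_nonneg _)]
  rw [hGrw, hFrw]
  exact ENNReal.toReal_mono hI_top hAI
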